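/- For every DLS program P, the least fixed point of the immediate consequence operator IC_P (in the complete lattice of databases ordered by inclusion) equals the intersection of all Herbrand models of P; that is, the fixed-point semantics and the model-theoretic semantics of DLS coincide. -/
import Mathlib


namespace DLS

/-! Datalog with first-class facts (DLS): basic syntax and semantics. -/

variable {Rel Lit Var : Type}

/-- A value is either a literal or a fact `R(v₁,…,vₙ)`. -/
inductive Val (Rel Lit : Type) : Type where
  | lit : Lit → Val Rel Lit
  | fact : Rel → List (Val Rel Lit) → Val Rel Lit

/-- A fact is a relation symbol applied to a finite list of values. -/
abbrev Fact (Rel Lit : Type) : Type := Rel × List (Val Rel Lit)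

/-- A database is a set of facts. -/
abbrev Database (Rel Lit : Type) : Type := Set (Fact Rel Lit)

def Fact.toVal (f : Fact Rel Lit) : Val Rel Lit := Val.fact f.1 f.2

mutual
/-- All subfacts of a value: `subfact(R(v₁,…,vₙ)) = {R(v₁,…,vₙ)} ∪ ⋃ᵢ subfact(vᵢ)`,
    and `subfact(v) = ∅` for a literal `v`. -/
def Val.subfacts : Val Rel Lit → Set (Fact Rel Lit)
  | .lit _ => ∅
  | .fact R args => insert (R, args) (Val.subfactsList args)
def Val.subfactsList : List (Val Rel Lit) → Set (Fact Rel Lit)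
  | [] => ∅
  | v :: vs => v.subfacts ∪ Val.subfactsList vs
end

/-- The `subfact` function on facts. -/
def Fact.subfact (f : Fact Rel Lit) : Set (Fact Rel Lit) :=
  Val.subfacts (Val.fact f.1 f.2)

/-- A database is subfact-closed if `db = ⋃ {subfact(f) | f ∈ db}`. -/
def SubfactClosed (db : Database Rel Lit) : Prop :=
  db = ⋃ f ∈ db, Fact.subfact f

/-- An argument of a clause: a variable, a literal, or a (sub)clause. -/
inductive Arg (Rel Lit Var : Type) : Type where
  | var : Var → Arg Rel Lit Var
  | lit : Lit → Arg Rel Lit Var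
  | clause : Rel → List (Arg Rel Lit Var) → Arg Rel Lit Var

/-- A clause is a relation symbol applied to a finite list of arguments. -/
abbrev Clause (Rel Lit Var : Type) : Type := Rel × List (Arg Rel Lit Var)

/-- A substitution maps variables to values. -/
abbrev Subst (Rel Lit Var : Type) : Type := Var → Val Rel Lit

mutual
/-- Applying a substitution to an argument yields a value. -/
def Arg.subst (θ : Subst Rel Lit Var) : Arg Rel Lit Var → Val Rel Lit
  | .var x => θ x
  | .lit l => .lit l
  | .clause R args => .fact R (Arg.substList θ args)
def Arg.substList (θ : Subst Rel Lit Var) : List (Arg Rel Lit Var) → List (Val Rel Lit)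
  | [] => []
  | a :: as => Arg.subst θ a :: Arg.substList θ as
end

/-- `c[θ]`: the fact obtained by substituting each variable of clause `c` by its image. -/
def Clause.subst (θ : Subst Rel Lit Var) (c : Clause Rel Lit Var) : Fact Rel Lit :=
  (c.1, Arg.substList θ c.2)

mutual
/-- The variables occurring in an argument. -/
def Arg.vars : Arg Rel Lit Var → Set Var
  | .var x => {x}
  | .lit _ => ∅
  | .clause _ args => Arg.varsList args
def Arg.varsList : List (Arg Rel Lit Var) → Set Var
  | [] => ∅
  | a :: as => a.vars ∪ Arg.varsList as
end

/-- The variables occurring in a clause. -/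
def Clause.vars (c : Clause Rel Lit Var) : Set Var := Arg.varsList c.2

mutual
/-- The literals occurring in an argument. -/
def Arg.lits : Arg Rel Lit Var → Set Lit
  | .var _ => ∅
  | .lit l => {l}
  | .clause _ args => Arg.litsList args
def Arg.litsList : List (Arg Rel Lit Var) → Set Lit
  | [] => ∅
  | a :: as => a.lits ∪ Arg.litsList as
end

/-- The literals occurring in a clause. -/
def Clause.lits (c : Clause Rel Lit Var) : Set Lit := Arg.litsList c.2

/-- A rule has a head clause and a finite set of body clauses. -/
structure Rule (Rel Lit Var : Type) : Type where
  head : Clause Rel Lit Var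
  body : Set (Clause Rel Lit Var)
  body_finite : body.Finite

/-- The literals occurring in a rule. -/
def Rule.lits (R : Rule Rel Lit Var) : Set Lit :=
  R.head.lits ∪ ⋃ c ∈ R.body, c.lits

/-- A rule is well-scoped if every variable of the head occurs in the body. -/
def Rule.WellScoped (R : Rule Rel Lit Var) : Prop :=
  R.head.vars ⊆ ⋃ c ∈ R.body, c.vars

/-- Immediate consequence of a rule:
    `IC_R(db) = db ∪ ⋃ { subfact(Head(R)[θ]) | θ with Body(R)[θ] ⊆ db }`. -/
def Rule.IC (R : Rule Rel Lit Var) (db : Database Rel Lit) : Database Rel Lit :=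
  db ∪ ⋃ (θ : Subst Rel Lit Var) (_ : ∀ c ∈ R.body, Clause.subst θ c ∈ db),
      Fact.subfact (Clause.subst θ R.head)

/-- A DLS program is a finite set of well-scoped rules. -/
structure Program (Rel Lit Var : Type) : Type where
  rules : Set (Rule Rel Lit Var)
  rules_finite : rules.Finite
  wellScoped : ∀ R ∈ rules, R.WellScoped

/-- Immediate consequence of a program: `IC_P(db) = db ∪ ⋃_{R ∈ P} IC_R(db)`. -/
def Program.IC (P : Program Rel Lit Var) (db : Database Rel Lit) : Database Rel Lit :=
  db ∪ ⋃ R ∈ P.rules, R.IC db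

theorem Rule.IC_mono (R : Rule Rel Lit Var) : Monotone R.IC := by
  intro a b hab x hx
  rcases hx with hx | hx
  · exact Or.inl (hab hx)
  · right
    simp only [Set.mem_iUnion] at hx ⊢
    obtain ⟨θ, hθ, hm⟩ := hx
    exact ⟨θ, fun c hc => hab (hθ c hc), hm⟩

theorem Program.IC_mono (P : Program Rel Lit Var) : Monotone P.IC := by
  intro a b hab x hx
  rcases hx with hx | hx
  · exact Or.inl (hab hx)
  · right
    simp only [Set.mem_iUnion] at hx ⊢
    obtain ⟨R, hR, hm⟩ := hx
    exact ⟨R, hR, R.IC_mono hab hm⟩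

/-- The immediate consequence operator `IC_P`, as a monotone map on the complete
    lattice of databases ordered by inclusion. Its least fixed point is
    `OrderHom.lfp P.ICHom`. -/
def Program.ICHom (P : Program Rel Lit Var) : Database Rel Lit →o Database Rel Lit :=
  ⟨P.IC, P.IC_mono⟩

/-- `I ⊨ R`: for every substitution θ, `Body(R)[θ] ⊆ I` implies `Head(R)[θ] ∈ I`. -/
def Models (I : Database Rel Lit) (R : Rule Rel Lit Var) : Prop :=
  ∀ θ : Subst Rel Lit Var, (∀ c ∈ R.body, Clause.subst θ c ∈ I) → Clause.subst θ R.head ∈ I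

/-- A Herbrand model of `P` is a subfact-closed database satisfying every rule of `P`. -/
def HerbrandModel (P : Program Rel Lit Var) (I : Database Rel Lit) : Prop :=
  SubfactClosed I ∧ ∀ R ∈ P.rules, Models I R

/-- An argument is flat if it is a variable or a literal (not a nested clause). -/
def Arg.IsFlat : Arg Rel Lit Var → Prop
  | .clause _ _ => False
  | _ => True

/-- A clause is flat if every argument is a variable or a literal. -/
def Clause.Flat (c : Clause Rel Lit Var) : Prop := ∀ a ∈ c.2, a.IsFlat

/-- A rule is flat if its head clause and all its body clauses are flat. -/
def Rule.Flat (R : Rule Rel Lit Var) : Prop := R.head.Flat ∧ ∀ c ∈ R.body, c.Flat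

/-- A fact is flat if every argument in its argument list is a literal. -/
def Fact.Flat (f : Fact Rel Lit) : Prop := ∀ v ∈ f.2, ∃ l : Lit, v = Val.lit l

/-- `natFact z s n` encodes the natural number `n` as the fact
    `s(s(...(z())...))` with `n` applications of `s`. -/
def natFact (z s : Rel) : ℕ → Fact Rel Lit
  | 0 => (z, [])
  | n + 1 => (s, [(natFact z s n).toVal])


mutual
theorem Val.subfact_trans (v : Val Rel Lit) :
    ∀ g ∈ v.subfacts, Fact.subfact g ⊆ v.subfacts := by
  intro g hg
  cases v with
  | lit l => exact absurd hg (by simp [Val.subfacts])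
  | fact R args =>
    rcases hg with hg | hg
    · subst hg; exact le_refl _
    · exact (Val.subfact_trans_list args g hg).trans (Set.subset_insert _ _)
theorem Val.subfact_trans_list (vs : List (Val Rel Lit)) :
    ∀ g ∈ Val.subfactsList vs, Fact.subfact g ⊆ Val.subfactsList vs := by
  intro g hg
  cases vs with
  | nil => exact absurd hg (by simp [Val.subfactsList])
  | cons v vs =>
    rcases hg with hg | hg
    · exact (Val.subfact_trans v g hg).trans Set.subset_union_left
    · exact (Val.subfact_trans_list vs g hg).trans Set.subset_union_right
end

theorem Fact.mem_subfact_self (f : Fact Rel Lit) : f ∈ f.subfact := by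
  show f ∈ Val.subfacts (Val.fact f.1 f.2)
  simp [Val.subfacts]

theorem Fact.subfact_trans {f g : Fact Rel Lit} (h : g ∈ f.subfact) :
    g.subfact ⊆ f.subfact :=
  Val.subfact_trans _ g h

theorem herbrand_prefixed {P : Program Rel Lit Var} {I : Database Rel Lit}
    (h : HerbrandModel P I) : P.IC I ⊆ I := by
  rintro f (hf | hf)
  · exact hf
  · simp only [Set.mem_iUnion] at hf
    obtain ⟨R, hR, hf⟩ := hf
    rcases hf with hf | hf
    · exact hf
    · simp only [Set.mem_iUnion] at hf
      obtain ⟨θ, hθ, hm⟩ := hf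
      have hhead : Clause.subst θ R.head ∈ I := h.2 R hR θ hθ
      have := h.1
      rw [SubfactClosed] at this
      rw [this]
      exact Set.mem_biUnion hhead hm

theorem lfp_subfactClosed {P : Program Rel Lit Var} :
    SubfactClosed (OrderHom.lfp P.ICHom : Database Rel Lit) := by
  set L : Database Rel Lit := OrderHom.lfp P.ICHom with hL
  set S : Database Rel Lit := {f ∈ L | Fact.subfact f ⊆ L} with hS
  have hSL : S ⊆ L := fun f hf => hf.1
  have hpre : P.IC S ⊆ S := by
    rintro f (hf | hf)
    · exact hf
    · simp only [Set.mem_iUnion] at hf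
      obtain ⟨R, hR, hf⟩ := hf
      rcases hf with hf | hf
      · exact hf
      · simp only [Set.mem_iUnion] at hf
        obtain ⟨θ, hθ, hm⟩ := hf
        have hsub : Fact.subfact (Clause.subst θ R.head) ⊆ L := by
          have h1 : (Fact.subfact (Clause.subst θ R.head) : Database Rel Lit) ⊆ P.IC L := by
            intro g hg
            right
            simp only [Set.mem_iUnion]
            refine ⟨R, hR, Or.inr ?_⟩
            simp only [Set.mem_iUnion]
            exact ⟨θ, fun c hc => (hθ c hc).1, hg⟩
          have h2 : P.IC L = L := by
            have := OrderHom.map_lfp (P.ICHom)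
            exact this
          rw [h2] at h1; exact h1
        exact ⟨hsub hm, (Fact.subfact_trans hm).trans hsub⟩
  have hLS : L ⊆ S := OrderHom.lfp_le P.ICHom hpre
  rw [SubfactClosed]
  apply Set.Subset.antisymm
  · intro f hf
    exact Set.mem_biUnion hf (Fact.mem_subfact_self f)
  · intro f hf
    simp only [Set.mem_iUnion] at hf
    obtain ⟨g, hg, hf⟩ := hf
    exact (hLS hg).2 hf

theorem lfp_herbrandModel {P : Program Rel Lit Var} :
    HerbrandModel P (OrderHom.lfp P.ICHom : Database Rel Lit) := by
  refine ⟨lfp_subfactClosed, fun R hR θ hθ => ?_⟩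
  have h2 : P.IC (OrderHom.lfp P.ICHom) = OrderHom.lfp P.ICHom :=
    OrderHom.map_lfp P.ICHom
  rw [← h2]
  right
  simp only [Set.mem_iUnion]
  refine ⟨R, hR, Or.inr ?_⟩
  simp only [Set.mem_iUnion]
  exact ⟨θ, hθ, Fact.mem_subfact_self _⟩

/-- for every DLS program `P`, the least fixed point of `IC_P`
equals the intersection of all Herbrand models of `P` (the fixed-point and
model-theoretic semantics coincide). -/
theorem lfp_IC_eq_sInter_herbrandModels {Rel Lit Var : Type} (P : Program Rel Lit Var) :
    OrderHom.lfp P.ICHom = ⋂₀ {I : Database Rel Lit | HerbrandModel P I} := by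
  apply Set.Subset.antisymm
  · intro f hf
    rw [Set.mem_sInter]
    intro I hI
    exact OrderHom.lfp_le P.ICHom (herbrand_prefixed hI) hf
  · intro f hf
    exact hf _ lfp_herbrandModel

end DLS
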